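/- arXiv:1802.03857 — 2 statements merged into one kernel-verified Lean document; each statement's English description precedes it below -/
import Mathlib

section
/- Let h be a hermitian form of rank n over (K, ‾) where K = F(√δ) is a quadratic field extension of F (char F ≠ 2), and let q_h be its trace form (a 2n-dimensional F-quadratic form). Then the Witt index of q_h equals twice the Witt index of h: i_w(q_h) = 2·i_w(h). -/
open Module

private lemma antifix_aux {F K : Type} [Field F] [Field K] [Algebra F K]
    (h2 : (2 : F) ≠ 0) (hrank : Module.finrank F K = 2)
    (s : K) (hs0 : s ≠ 0) (σ : K ≃ₐ[F] K) (hσs : σ s = -s) :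
    ∀ k : K, σ k = -k → ∃ a : F, k = a • s := by
  have hA2 : (algebraMap F K) 2 = 2 := map_ofNat _ 2
  have hinj : Function.Injective (algebraMap F K) := (algebraMap F K).injective
  have hli : LinearIndependent F ![(1 : K), s] := by
    rw [LinearIndependent.pair_iff]
    intro a b hab
    have hσab : σ (a • (1:K) + b • s) = 0 := by rw [hab, map_zero]
    rw [map_add, map_smul, map_smul, map_one, hσs, smul_neg] at hσab
    have hab' : algebraMap F K a + algebraMap F K b * s = 0 := by
      rw [← hab, Algebra.smul_def, Algebra.smul_def, mul_one]
    have hσab' : algebraMap F K a - algebraMap F K b * s = 0 := by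
      rw [← hσab, Algebra.smul_def, Algebra.smul_def, mul_one]; ring
    have h2a : algebraMap F K (2*a) = 0 := by
      rw [map_mul, hA2]; linear_combination hab' + hσab'
    have ha : a = 0 := by
      have := hinj (h2a.trans (map_zero _).symm)
      rcases mul_eq_zero.mp this with h | h
      · exact absurd h h2
      · exact h
    refine ⟨ha, ?_⟩
    rw [ha, map_zero, zero_add] at hab'
    rcases mul_eq_zero.mp hab' with h | h
    · exact hinj (h.trans (map_zero _).symm)
    · exact absurd h hs0
  intro k hk
  have hk_mem : k ∈ Submodule.span F ({(1:K), s} : Set K) := by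
    have hsp := (basisOfLinearIndependentOfCardEqFinrank hli (by simp [hrank])).span_eq
    rw [coe_basisOfLinearIndependentOfCardEqFinrank] at hsp
    have hr : Set.range ![(1:K), s] = {(1:K), s} := by
      ext x
      simp only [Matrix.range_cons, Matrix.range_empty, Set.union_singleton, Set.mem_insert_iff,
        Set.mem_singleton_iff, Set.mem_union]
      tauto
    rw [hr] at hsp
    rw [hsp]; trivial
  obtain ⟨a, b, hab⟩ := Submodule.mem_span_pair.mp hk_mem
  have h1 : a • (1:K) + b • (-s) = -k := by
    rw [← hk, ← hab, map_add, map_smul, map_smul, map_one, hσs]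
  have hab' : algebraMap F K a + algebraMap F K b * s = k := by
    rw [← hab, Algebra.smul_def, Algebra.smul_def, mul_one]
  have h1' : algebraMap F K a - algebraMap F K b * s = -k := by
    rw [← h1, smul_neg, Algebra.smul_def, Algebra.smul_def, mul_one]; ring
  have h2a : algebraMap F K (2*a) = 0 := by
    rw [map_mul, hA2]; linear_combination hab' + h1'
  have ha : a = 0 := by
    have := hinj (h2a.trans (map_zero _).symm)
    rcases mul_eq_zero.mp this with h | h
    · exact absurd h h2
    · exact h
  exact ⟨b, by rw [← hab, ha, zero_smul, zero_add]⟩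

private lemma codim_le_aux {F K V : Type} [Field F] [AddCommGroup V] [Module F V]
    [FiniteDimensional F V] [Field K] [Algebra F K] [FiniteDimensional F K]
    (s : K) (hs0 : s ≠ 0) (φ : V →ₗ[F] K) (W : Submodule F V)
    (hr : ∀ x ∈ W, ∃ a : F, φ x = a • s) :
    Module.finrank F ↥W ≤ Module.finrank F ↥(W ⊓ LinearMap.ker φ) + 1 := by
  have hrn := LinearMap.finrank_range_add_finrank_ker (φ.comp W.subtype)
  have hker : Module.finrank F ↥(LinearMap.ker (φ.comp W.subtype))
      = Module.finrank F ↥(W ⊓ LinearMap.ker φ) := by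
    rw [LinearMap.ker_comp]
    have hc : Submodule.comap W.subtype (LinearMap.ker φ)
        = Submodule.comap W.subtype (W ⊓ LinearMap.ker φ) := by
      rw [Submodule.comap_inf, Submodule.comap_subtype_self, top_inf_eq]
    rw [hc]
    exact LinearEquiv.finrank_eq (Submodule.comapSubtypeEquivOfLe inf_le_left)
  have hrange : Module.finrank F ↥(LinearMap.range (φ.comp W.subtype)) ≤ 1 := by
    have hle : LinearMap.range (φ.comp W.subtype) ≤ Submodule.span F {s} := by
      rintro y ⟨⟨x, hx⟩, rfl⟩
      obtain ⟨a, ha⟩ := hr x hx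
      exact Submodule.mem_span_singleton.mpr ⟨a, ha.symm⟩
    calc Module.finrank F ↥(LinearMap.range (φ.comp W.subtype))
        ≤ Module.finrank F ↥(Submodule.span F {s}) := Submodule.finrank_mono hle
      _ = 1 := finrank_span_singleton hs0
  omega

set_option maxHeartbeats 2000000

/-- Let `K = F(√δ)` be a quadratic field extension of `F` (char `F ≠ 2`) with conjugation
`σ`, and let `h` be a nondegenerate hermitian form of rank `n` over `(K, σ)`.  The Witt
index of the trace form `q_h(x) = h(x,x)` (a `2n`-dimensional `F`-quadratic form on `Kⁿ`,
whose totally isotropic `F`-subspaces are those on which `h(x,x)` vanishes) equals twice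
the Witt index of `h` (the maximal `K`-dimension of a totally isotropic `K`-subspace). -/
theorem wittIndex_trace_form_unitary
    (F : Type) [Field F] (h2 : (2 : F) ≠ 0)
    (K : Type) [Field K] [Algebra F K] (hrank : Module.finrank F K = 2)
    (δ : F) (hδ : δ ≠ 0) (hns : ¬ IsSquare δ)
    (s : K) (hs : s * s = algebraMap F K δ)
    (σ : K ≃ₐ[F] K) (hσinv : ∀ x, σ (σ x) = x) (hσs : σ s = -s)
    (n : ℕ) (h : (Fin n → K) → (Fin n → K) → K)
    (hadd : ∀ x x' y, h (x + x') y = h x y + h x' y)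
    (hsmul : ∀ (c : K) (x y), h (c • x) y = σ c * h x y)
    (hherm : ∀ x y, h y x = σ (h x y))
    (hnd : ∀ x, (∀ y, h x y = 0) → x = 0) :
    sSup {r | ∃ W : Submodule F (Fin n → K),
        (∀ x ∈ W, h x x = 0) ∧ Module.finrank F ↥W = r}
      = 2 * sSup {r | ∃ W : Submodule K (Fin n → K),
          (∀ x ∈ W, ∀ y ∈ W, h x y = 0) ∧ Module.finrank K ↥W = r} := by
  -- basic instances
  haveI hFK : FiniteDimensional F K := Module.finite_of_finrank_eq_succ hrank
  haveI : FiniteDimensional F (Fin n → K) := Module.Finite.trans K _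
  -- s ≠ 0
  have hs0 : s ≠ 0 := by
    intro h0
    apply hδ
    have : algebraMap F K δ = 0 := by rw [← hs, h0, mul_zero]
    exact (algebraMap F K).injective (this.trans (map_zero _).symm)
  -- derived bilinearity facts
  have haddr : ∀ x y y', h x (y + y') = h x y + h x y' := by
    intro x y y'
    rw [hherm (y + y') x, hadd, map_add, ← hherm y x, ← hherm y' x]
  have hsmulr : ∀ (c : K) (x y), h x (c • y) = c * h x y := by
    intro c x y
    rw [hherm (c • y) x, hsmul, map_mul, hσinv, ← hherm y x]
  have hzl : ∀ y, h 0 y = 0 := by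
    intro y
    have := hsmul 0 0 y
    rw [zero_smul, map_zero, zero_mul] at this
    exact this
  have hzr : ∀ x, h x 0 = 0 := by
    intro x
    rw [hherm 0 x, hzl, map_zero]
  have hFsmul : ∀ (a : F) (x y : Fin n → K), h (a • x) y = a • h x y := by
    intro a x y
    rw [← algebraMap_smul K a x, hsmul, AlgEquiv.commutes, Algebra.smul_def]
  -- the F-linear maps h(·, v)
  let φ : (Fin n → K) → ((Fin n → K) →ₗ[F] K) := fun v =>
    { toFun := fun x => h x v
      map_add' := fun x y => hadd x y v
      map_smul' := fun a x => by
        simp only [RingHom.id_apply]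
        exact hFsmul a x v }
  have hφ : ∀ v x, φ v x = h x v := fun _ _ => rfl
  -- the easy "totally isotropic" case
  have spanCase : ∀ W : Submodule F (Fin n → K), (∀ x ∈ W, ∀ y ∈ W, h x y = 0) →
      ∃ U : Submodule K (Fin n → K), (∀ x ∈ U, ∀ y ∈ U, h x y = 0) ∧
        U ≤ Submodule.span K (W : Set (Fin n → K)) ∧
        Module.finrank F ↥W ≤ 2 * Module.finrank K ↥U := by
    intro W hz
    refine ⟨Submodule.span K (W : Set (Fin n → K)), ?_, le_rfl, ?_⟩
    · have step1 : ∀ y ∈ W, ∀ x ∈ Submodule.span K (W : Set (Fin n → K)), h x y = 0 := by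
        intro y hy x hx
        induction hx using Submodule.span_induction with
        | mem z hz' => exact hz z hz' y hy
        | zero => exact hzl y
        | add a b _ _ ha hb => rw [hadd, ha, hb, add_zero]
        | smul c a _ ha => rw [hsmul, ha, mul_zero]
      intro x hx y hy
      induction hy using Submodule.span_induction with
      | mem z hz' => exact step1 z hz' x hx
      | zero => exact hzr x
      | add a b _ _ ha hb => rw [haddr, ha, hb, add_zero]
      | smul c a _ ha => rw [hsmulr, ha, mul_zero]
    · have h1 : Module.finrank F ↥W
          ≤ Module.finrank F ↥(Submodule.span K (W : Set (Fin n → K))) := by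
        have hle : W ≤ (Submodule.span K (W : Set (Fin n → K))).restrictScalars F :=
          fun x hx => Submodule.subset_span hx
        exact Submodule.finrank_mono hle
      have h2' : Module.finrank F ↥(Submodule.span K (W : Set (Fin n → K)))
          = 2 * Module.finrank K ↥(Submodule.span K (W : Set (Fin n → K))) := by
        rw [← hrank]
        exact (finrank_mul_finrank F K _).symm
      omega
  -- key induction
  have key : ∀ (N : ℕ) (W : Submodule F (Fin n → K)), Module.finrank F ↥W ≤ N →
      (∀ x ∈ W, h x x = 0) →
      ∃ U : Submodule K (Fin n → K), (∀ x ∈ U, ∀ y ∈ U, h x y = 0) ∧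
        U ≤ Submodule.span K (W : Set (Fin n → K)) ∧
        Module.finrank F ↥W ≤ 2 * Module.finrank K ↥U := by
    intro N
    induction N with
    | zero =>
      intro W hN hW
      have hWbot : W = ⊥ := by
        have h0 : Module.finrank F ↥W = 0 := Nat.le_zero.mp hN
        exact Submodule.finrank_eq_zero.mp h0
      refine spanCase W ?_
      intro x hx y hy
      rw [hWbot, Submodule.mem_bot] at hx
      rw [hx]
      exact hzl y
    | succ N ih =>
      intro W hN hW
      by_cases hz : ∀ x ∈ W, ∀ y ∈ W, h x y = 0
      · exact spanCase W hz
      · push_neg at hz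
        obtain ⟨e, he, f, hf, hef⟩ := hz
        have hpol : ∀ x ∈ W, ∀ y ∈ W, h y x = - h x y := by
          intro x hx y hy
          have h0 := hW _ (W.add_mem hx hy)
          rw [hadd, haddr, haddr, hW x hx, hW y hy] at h0
          linear_combination h0
        have hes : ∀ x ∈ W, ∀ y ∈ W, ∃ a : F, h x y = a • s := by
          intro x hx y hy
          refine antifix_aux h2 hrank s hs0 σ hσs (h x y) ?_
          rw [← hherm x y]
          exact hpol x hx y hy
        have c1 := codim_le_aux s hs0 (φ e) W (fun x hx => hes x hx e he)
        set W1 := W ⊓ LinearMap.ker (φ e) with hW1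
        have c2 := codim_le_aux s hs0 (φ f) W1 (fun x hx => hes x hx.1 f hf)
        set W' := W1 ⊓ LinearMap.ker (φ f) with hW'
        have hW'W : W' ≤ W := le_trans inf_le_left inf_le_left
        have hfW' : f ∉ W' := by
          intro hfw
          have hfe : h f e = 0 := hfw.1.2
          apply hef
          have h1 : σ (h e f) = 0 := by rw [← hherm e f]; exact hfe
          exact σ.injective (h1.trans (map_zero σ).symm)
        have hlt : W' < W := lt_of_le_of_ne hW'W (by
          intro hEq
          exact hfW' (hEq.symm ▸ hf))
        have hdimlt : Module.finrank F ↥W' < Module.finrank F ↥W :=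
          Submodule.finrank_lt_finrank_of_lt hlt
        obtain ⟨U', hU'iso, hU'le, hU'rk⟩ := ih W' (by omega) (fun x hx => hW x (hW'W hx))
        have hA : ∀ u ∈ Submodule.span K ((W' : Set (Fin n → K))), h u f = 0 := by
          intro u hu
          induction hu using Submodule.span_induction with
          | mem z hz' => exact hz'.2
          | zero => exact hzl f
          | add a b _ _ ha hb => rw [hadd, ha, hb, add_zero]
          | smul c a _ ha => rw [hsmul, ha, mul_zero]
        have hB : ∀ u ∈ Submodule.span K ((W' : Set (Fin n → K))), h e u = 0 := by
          intro u hu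
          induction hu using Submodule.span_induction with
          | mem z hz' =>
            have hz0 : h z e = 0 := hz'.1.2
            rw [hherm z e, hz0, map_zero]
          | zero => exact hzr e
          | add a b _ _ ha hb => rw [haddr, ha, hb, add_zero]
          | smul c a _ ha => rw [hsmulr, ha, mul_zero]
        have hA' : ∀ u ∈ Submodule.span K ((W' : Set (Fin n → K))), h u e = 0 := by
          intro u hu
          rw [hherm e u, hB u hu, map_zero]
        have heU' : e ∉ U' := fun he' => hef (hA e (hU'le he'))
        have he0 : e ≠ 0 := by
          intro h0
          apply hef
          rw [h0]
          exact hzl f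
        refine ⟨U' ⊔ Submodule.span K {e}, ?_, ?_, ?_⟩
        · intro x hx y hy
          obtain ⟨u, hu, v, hv, rfl⟩ := Submodule.mem_sup.mp hx
          obtain ⟨u', hu', v', hv', rfl⟩ := Submodule.mem_sup.mp hy
          obtain ⟨c, rfl⟩ := Submodule.mem_span_singleton.mp hv
          obtain ⟨d, rfl⟩ := Submodule.mem_span_singleton.mp hv'
          have h1 : h u u' = 0 := hU'iso u hu u' hu'
          have h2' : h u e = 0 := hA' u (hU'le hu)
          have h3 : h e u' = 0 := hB u' (hU'le hu')
          have h4 : h e e = 0 := hW e he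
          simp only [hadd, haddr, hsmul, hsmulr, h1, h2', h3, h4, mul_zero, add_zero, zero_add]
        · apply sup_le
          · refine le_trans hU'le (Submodule.span_mono ?_)
            exact fun x hx => hW'W hx
          · exact Submodule.span_le.mpr (Set.singleton_subset_iff.mpr (Submodule.subset_span he))
        · have hsum := Submodule.finrank_sup_add_finrank_inf_eq U' (Submodule.span K {e})
          have hbot : U' ⊓ Submodule.span K {e} = ⊥ := by
            rw [eq_bot_iff]
            rintro x ⟨hx1, hx2⟩
            obtain ⟨c, rfl⟩ := Submodule.mem_span_singleton.mp hx2
            rcases eq_or_ne c 0 with rfl | hc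
            · simp
            · exfalso
              apply heU'
              have := U'.smul_mem c⁻¹ hx1
              rwa [smul_smul, inv_mul_cancel₀ hc, one_smul] at this
          rw [hbot, finrank_bot, finrank_span_singleton he0] at hsum
          omega
  -- the two sets
  have hA0 : (0 : ℕ) ∈ {r | ∃ W : Submodule F (Fin n → K),
      (∀ x ∈ W, h x x = 0) ∧ Module.finrank F ↥W = r} := by
    refine ⟨⊥, ?_, finrank_bot F _⟩
    intro x hx
    rw [Submodule.mem_bot] at hx
    rw [hx]
    exact hzl 0
  have hB0 : (0 : ℕ) ∈ {r | ∃ W : Submodule K (Fin n → K),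
      (∀ x ∈ W, ∀ y ∈ W, h x y = 0) ∧ Module.finrank K ↥W = r} := by
    refine ⟨⊥, ?_, finrank_bot K _⟩
    intro x hx
    rw [Submodule.mem_bot] at hx
    intro y hy
    rw [hx]
    exact hzl y
  have hAbdd : BddAbove {r | ∃ W : Submodule F (Fin n → K),
      (∀ x ∈ W, h x x = 0) ∧ Module.finrank F ↥W = r} := by
    refine ⟨Module.finrank F (Fin n → K), ?_⟩
    rintro r ⟨W, _, rfl⟩
    exact Submodule.finrank_le W
  have hBbdd : BddAbove {r | ∃ W : Submodule K (Fin n → K),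
      (∀ x ∈ W, ∀ y ∈ W, h x y = 0) ∧ Module.finrank K ↥W = r} := by
    refine ⟨Module.finrank K (Fin n → K), ?_⟩
    rintro r ⟨W, _, rfl⟩
    exact Submodule.finrank_le W
  apply le_antisymm
  · apply csSup_le ⟨0, hA0⟩
    rintro r ⟨W, hW, rfl⟩
    obtain ⟨U, hUiso, _, hUrk⟩ := key (Module.finrank F ↥W) W le_rfl hW
    have hmem : Module.finrank K ↥U ∈ {r | ∃ W : Submodule K (Fin n → K),
        (∀ x ∈ W, ∀ y ∈ W, h x y = 0) ∧ Module.finrank K ↥W = r} := ⟨U, hUiso, rfl⟩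
    calc Module.finrank F ↥W ≤ 2 * Module.finrank K ↥U := hUrk
      _ ≤ 2 * sSup {r | ∃ W : Submodule K (Fin n → K),
          (∀ x ∈ W, ∀ y ∈ W, h x y = 0) ∧ Module.finrank K ↥W = r} :=
        Nat.mul_le_mul_left 2 (le_csSup hBbdd hmem)
  · obtain ⟨U, hUiso, hUrk⟩ := Nat.sSup_mem ⟨0, hB0⟩ hBbdd
    apply le_csSup hAbdd
    refine ⟨U.restrictScalars F, ?_, ?_⟩
    · intro x hx
      exact hUiso x hx x hx
    · show Module.finrank F ↥U = _
      rw [← hUrk, ← hrank]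
      exact (finrank_mul_finrank F K ↥U).symm
end

section
/- Let H be a quaternion division algebra over F (char F ≠ 2) and h a nondegenerate hermitian form of rank m over (H, ‾) with trace form q_h (a 4m-dimensional F-quadratic form). Then i_w(q_h) = 4·i_w(h). -/
open Quaternion Module Submodule

namespace WittQH

variable {F : Type} [Field F] {a b : F} {m : ℕ}

local notation "H" => ℍ[F,a,b]
local notation "M" => (Fin m → ℍ[F,a,b])

/-- Axioms of a hermitian form. -/
structure HermAx (h : (Fin m → ℍ[F,a,b]) → (Fin m → ℍ[F,a,b]) → ℍ[F,a,b]) : Prop where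
  add : ∀ x x' y, h (x + x') y = h x y + h x' y
  smul : ∀ (c : ℍ[F,a,b]) (x y), h (c • x) y = star c * h x y
  herm : ∀ x y, h y x = star (h x y)

namespace HermAx

variable {h : (Fin m → ℍ[F,a,b]) → (Fin m → ℍ[F,a,b]) → ℍ[F,a,b]} (hh : HermAx h)
include hh

/-- `h · y` as an additive monoid hom. -/
noncomputable def lhom (y : M) : (Fin m → ℍ[F,a,b]) →+ ℍ[F,a,b] :=
  AddMonoidHom.mk' (fun x => h x y) (fun x x' => hh.add x x' y)

lemma lhom_apply (y x : M) : hh.lhom y x = h x y := rfl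

lemma zero_left (y : M) : h 0 y = 0 := map_zero (hh.lhom y)

lemma addr (x y y' : M) : h x (y + y') = h x y + h x y' := by
  rw [hh.herm, hh.add, star_add, ← hh.herm, ← hh.herm]

/-- `h x ·` as an additive monoid hom. -/
noncomputable def rhom (x : M) : (Fin m → ℍ[F,a,b]) →+ ℍ[F,a,b] :=
  AddMonoidHom.mk' (fun y => h x y) (fun y y' => hh.addr x y y')

lemma rhom_apply (x y : M) : hh.rhom x y = h x y := rfl

lemma zero_right (x : M) : h x 0 = 0 := map_zero (hh.rhom x)

lemma sub_left (x x' y : M) : h (x - x') y = h x y - h x' y := map_sub (hh.lhom y) x x'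

lemma sub_right (x y y' : M) : h x (y - y') = h x y - h x y' := map_sub (hh.rhom x) y y'

lemma neg_left (x y : M) : h (-x) y = - h x y := map_neg (hh.lhom y) x

lemma smulr (c : ℍ[F,a,b]) (x y : M) : h x (c • y) = h x y * c := by
  rw [hh.herm, hh.smul, star_mul, star_star, ← hh.herm]

lemma sum_right {ι : Type} (s : Finset ι) (x : M) (z : ι → M) :
    h x (∑ i ∈ s, z i) = ∑ i ∈ s, h x (z i) := map_sum (hh.rhom x) z s

lemma Fsmul_left (f : F) (x y : M) : h (f • x) y = f • h x y := by
  rw [← algebraMap_smul (ℍ[F,a,b]) f x, hh.smul, QuaternionAlgebra.coe_algebraMap,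
    QuaternionAlgebra.star_coe, ← QuaternionAlgebra.coe_algebraMap, Algebra.smul_def]

lemma Fsmul_right (f : F) (x y : M) : h x (f • y) = f • h x y := by
  rw [← algebraMap_smul (ℍ[F,a,b]) f y, hh.smulr, Algebra.smul_def, Algebra.commutes]

end HermAx

/-- A star-fixed quaternion is a scalar (char ≠ 2). -/
lemma star_fixed_eq_coe (h2 : (2:F) ≠ 0) (x : ℍ[F,a,b]) (hx : star x = x) :
    x = ((x.re : F) : ℍ[F,a,b]) := by
  have h1 : -x.imI = x.imI := congrArg QuaternionAlgebra.imI hx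
  have h2' : -x.imJ = x.imJ := congrArg QuaternionAlgebra.imJ hx
  have h3 : -x.imK = x.imK := congrArg QuaternionAlgebra.imK hx
  have e1 : x.imI = 0 := by
    have : (2:F) * x.imI = 0 := by linear_combination -h1
    exact (mul_eq_zero.mp this).resolve_left h2
  have e2 : x.imJ = 0 := by
    have : (2:F) * x.imJ = 0 := by linear_combination -h2'
    exact (mul_eq_zero.mp this).resolve_left h2
  have e3 : x.imK = 0 := by
    have : (2:F) * x.imK = 0 := by linear_combination -h3
    exact (mul_eq_zero.mp this).resolve_left h2
  ext <;> simp [e1, e2, e3]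


/-- Key quadratic-form lemma: in a space decomposed into an anisotropic part `M0` and
hyperbolic pairs `(e i, f i)` indexed by `s`, any totally isotropic subspace has
dimension at most `s.card`. -/
theorem lemIII {Mod : Type} [AddCommGroup Mod] [Module F Mod] [FiniteDimensional F Mod]
    (q : Mod → F) (B : Mod →ₗ[F] Mod →ₗ[F] F)
    (hpolar : ∀ x y, q (x + y) = q x + q y + B x y)
    (hsmulq : ∀ (c : F) (x : Mod), q (c • x) = c ^ 2 * q x)
    (hsymm : ∀ x y, B x y = B y x)
    {ι : Type} [DecidableEq ι] (e f : ι → Mod) (M0 : Submodule F Mod)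
    (han : ∀ x ∈ M0, q x = 0 → x = 0)
    (s : Finset ι) :
    (∀ i ∈ s, ∀ j ∈ s, B (e i) (e j) = 0) →
    (∀ i ∈ s, ∀ j ∈ s, B (f i) (f j) = 0) →
    (∀ i ∈ s, ∀ j ∈ s, B (e i) (f j) = if i = j then 1 else 0) →
    (∀ i ∈ s, q (e i) = 0) → (∀ i ∈ s, q (f i) = 0) →
    (∀ i ∈ s, ∀ x ∈ M0, B (e i) x = 0) →
    (∀ i ∈ s, ∀ x ∈ M0, B (f i) x = 0) →
    ∀ V : Submodule F Mod, (∀ x ∈ V, q x = 0) →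
    V ≤ M0 ⊔ (span F (e '' s) ⊔ span F (f '' s)) → finrank F V ≤ s.card := by
  classical
  induction s using Finset.induction_on with
  | empty =>
    intro _ _ _ _ _ _ _ V hV hle
    have : V = ⊥ := by
      rw [eq_bot_iff]
      intro x hx
      have hx0 : x ∈ M0 := by
        have := hle hx
        simpa using this
      simpa using han x hx0 (hV x hx)
    simp [this]
  | @insert i0 s hi0 ih =>
    intro hee hff hef hqe hqf he0 hf0 V hV hle
    simp only [Finset.coe_insert] at hle
    have hi0m : i0 ∈ insert i0 s := Finset.mem_insert_self i0 s
    set E := e i0 with hE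
    set Fl := f i0 with hFl
    -- the projection
    set π : Mod →ₗ[F] Mod :=
      LinearMap.id - ((B Fl).smulRight E) - ((B E).smulRight Fl) with hπ
    have hπa : ∀ x : Mod, π x = x - (B Fl x) • E - (B E x) • Fl := by
      intro x; simp [hπ]
    -- it maps the big space into the smaller one
    have πmaps : Submodule.map π (M0 ⊔ (span F (e '' (insert i0 s)) ⊔ span F (f '' (insert i0 s))))
        ≤ M0 ⊔ (span F (e '' s) ⊔ span F (f '' s)) := by
      rw [Submodule.map_sup, Submodule.map_sup, Submodule.map_span, Submodule.map_span]
      refine sup_le_sup ?_ (sup_le_sup ?_ ?_)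
      · intro y hy
        obtain ⟨x, hx, rfl⟩ := hy
        have h1 : B Fl x = 0 := hf0 i0 hi0m x hx
        have h2 : B E x = 0 := he0 i0 hi0m x hx
        rw [hπa, h1, h2]; simpa using hx
      · rw [Submodule.span_le]
        rintro y ⟨z, ⟨j, hj, rfl⟩, rfl⟩
        rcases Set.mem_insert_iff.mp hj with rfl | hj'
        · have h1 : B Fl (e j) = 1 := by
            rw [hsymm]; simpa using hef j hi0m j hi0m
          have h2 : B E (e j) = 0 := hee j hi0m j hi0m
          rw [hπa, h1, h2]
          simp [hE]
        · have hjs : j ∈ s := Finset.mem_coe.mp hj'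
          have h1 : B Fl (e j) = 0 := by
            rw [hsymm]
            have := hef j (Finset.mem_insert_of_mem hjs) i0 hi0m
            rw [this, if_neg]; intro hc; exact hi0 (hc ▸ hjs)
          have h2 : B E (e j) = 0 := hee i0 hi0m j (Finset.mem_insert_of_mem hjs)
          rw [hπa, h1, h2]
          simp only [zero_smul, sub_zero]
          exact Submodule.subset_span (Set.mem_image_of_mem e hj')
      · rw [Submodule.span_le]
        rintro y ⟨z, ⟨j, hj, rfl⟩, rfl⟩
        rcases Set.mem_insert_iff.mp hj with rfl | hj'
        · have h1 : B Fl (f j) = 0 := hff j hi0m j hi0m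
          have h2 : B E (f j) = 1 := by simpa using hef j hi0m j hi0m
          rw [hπa, h1, h2]
          simp [hFl]
        · have hjs : j ∈ s := Finset.mem_coe.mp hj'
          have h1 : B Fl (f j) = 0 := hff i0 hi0m j (Finset.mem_insert_of_mem hjs)
          have h2 : B E (f j) = 0 := by
            have := hef i0 hi0m j (Finset.mem_insert_of_mem hjs)
            rw [this, if_neg]; intro hc; exact hi0 (hc ▸ hjs)
          rw [hπa, h1, h2]
          simp only [zero_smul, sub_zero]
          exact Submodule.subset_span (Set.mem_image_of_mem f hj')
    -- bilinear form vanishes on V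
    have hBV : ∀ x ∈ V, ∀ y ∈ V, B x y = 0 := by
      intro x hx y hy
      have h1 := hpolar x y
      rw [hV _ (V.add_mem hx hy), hV x hx, hV y hy] at h1
      linear_combination -h1
    set Ve : Submodule F Mod := V ⊓ LinearMap.ker (B E) with hVe
    set V' : Submodule F Mod := Submodule.map π Ve with hV'
    have hV'le : V' ≤ M0 ⊔ (span F (e '' s) ⊔ span F (f '' s)) :=
      le_trans (Submodule.map_mono (le_trans inf_le_left hle)) πmaps
    have hV'q : ∀ x ∈ V', q x = 0 := by
      rintro _ ⟨y, hy, rfl⟩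
      have hyV : y ∈ V := hy.1
      have hyk : B E y = 0 := hy.2
      have hq : q y = 0 := hV y hyV
      have : π y = y + (-(B Fl y)) • E := by
        rw [hπa, hyk]; simp [sub_eq_add_neg]
      rw [this, hpolar, hq, hsmulq, hqe i0 hi0m, map_smul]
      have : B y E = 0 := by rw [hsymm]; exact hyk
      simp [this]
    have hIH : finrank F V' ≤ s.card :=
      ih (fun i hi j hj => hee i (Finset.mem_insert_of_mem hi) j (Finset.mem_insert_of_mem hj))
        (fun i hi j hj => hff i (Finset.mem_insert_of_mem hi) j (Finset.mem_insert_of_mem hj))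
        (fun i hi j hj => hef i (Finset.mem_insert_of_mem hi) j (Finset.mem_insert_of_mem hj))
        (fun i hi => hqe i (Finset.mem_insert_of_mem hi))
        (fun i hi => hqf i (Finset.mem_insert_of_mem hi))
        (fun i hi => he0 i (Finset.mem_insert_of_mem hi))
        (fun i hi => hf0 i (Finset.mem_insert_of_mem hi))
        V' hV'q hV'le
    -- rank computations
    set ψ : ↥Ve →ₗ[F] Mod := π.domRestrict Ve with hψ
    have hrangeψ : LinearMap.range ψ = V' := by
      rw [hV', hψ]; exact LinearMap.range_domRestrict Ve π
    have hrnψ : finrank F (LinearMap.range ψ) + finrank F (LinearMap.ker ψ) = finrank F ↥Ve :=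
      LinearMap.finrank_range_add_finrank_ker ψ
    rw [Finset.card_insert_of_notMem hi0]
    by_cases hcase : V ≤ LinearMap.ker (B E)
    · have hVeV : Ve = V := inf_eq_left.mpr hcase
      -- kernel of ψ has dimension at most 1
      have hker1 : finrank F (LinearMap.ker ψ) ≤ 1 := by
        set χ : ↥(LinearMap.ker ψ) →ₗ[F] F :=
          ((B Fl).comp (Ve.subtype)).comp (LinearMap.ker ψ).subtype with hχ
        have hinj : Function.Injective χ := by
          intro y z hyz
          have hy : π (y : ↥Ve) = 0 := y.2
          have hz : π (z : ↥Ve) = 0 := z.2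
          have hyk : B E ((y : ↥Ve) : Mod) = 0 := (y : ↥Ve).2.2
          have hzk : B E ((z : ↥Ve) : Mod) = 0 := (z : ↥Ve).2.2
          have hy' : ((y : ↥Ve) : Mod) = (B Fl ((y : ↥Ve) : Mod)) • E := by
            have h5 := hπa ((y : ↥Ve) : Mod)
            rw [hy, hyk] at h5
            have h6 : ((y : ↥Ve) : Mod) - (B Fl ((y : ↥Ve) : Mod)) • E = 0 := by
              simpa using h5.symm
            exact sub_eq_zero.mp h6
          have hz' : ((z : ↥Ve) : Mod) = (B Fl ((z : ↥Ve) : Mod)) • E := by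
            have h5 := hπa ((z : ↥Ve) : Mod)
            rw [hz, hzk] at h5
            have h6 : ((z : ↥Ve) : Mod) - (B Fl ((z : ↥Ve) : Mod)) • E = 0 := by
              simpa using h5.symm
            exact sub_eq_zero.mp h6
          have hBeq : B Fl ((y : ↥Ve) : Mod) = B Fl ((z : ↥Ve) : Mod) := by
            simpa [hχ] using hyz
          have : ((y : ↥Ve) : Mod) = ((z : ↥Ve) : Mod) := by
            rw [hy', hz', hBeq]
          exact Subtype.ext (Subtype.ext this)
        calc finrank F (LinearMap.ker ψ) ≤ finrank F F :=
              LinearMap.finrank_le_finrank_of_injective hinj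
          _ = 1 := finrank_self F
      have : finrank F V = finrank F V' + finrank F (LinearMap.ker ψ) := by
        rw [← hrangeψ, ← hVeV, ← hrnψ]
      omega
    · -- there is y0 ∈ V with B E y0 ≠ 0
      obtain ⟨y0, hy0V, hy0⟩ := SetLike.not_le_iff_exists.mp hcase
      have hy0' : B E y0 ≠ 0 := hy0
      -- kernel of ψ is trivial
      have hkerψ : LinearMap.ker ψ = ⊥ := by
        rw [eq_bot_iff]
        intro y hy
        have hy0m : π ((y : ↥Ve)) = 0 := hy
        have hyk : B E ((y : ↥Ve)) = 0 := y.2.2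
        have hy' : ((y : ↥Ve) : Mod) = (B Fl ((y : ↥Ve))) • E := by
          have h5 := hπa ((y : ↥Ve))
          rw [hy0m, hyk] at h5
          have h6 : ((y : ↥Ve) : Mod) - (B Fl ((y : ↥Ve))) • E = 0 := by
            simpa using h5.symm
          exact sub_eq_zero.mp h6
        have hmem : ((y : ↥Ve) : Mod) ∈ V := y.2.1
        have hB0 : B ((y : ↥Ve)) y0 = 0 := hBV _ hmem _ hy0V
        rw [hy'] at hB0
        simp only [map_smul, LinearMap.smul_apply, smul_eq_mul] at hB0
        rcases mul_eq_zero.mp hB0 with hc | hc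
        · have hy0'' : ((y : ↥Ve) : Mod) = 0 := by rw [hy', hc, zero_smul]
          simpa using Subtype.ext hy0''
        · exact absurd hc hy0'
      have heq : finrank F ↥Ve = finrank F V' := by
        rw [← hrangeψ, ← hrnψ, hkerψ]
        simp
      -- rank-nullity for B E restricted to V
      set φ : ↥V →ₗ[F] F := (B E).domRestrict V with hφ
      have hrnφ : finrank F (LinearMap.range φ) + finrank F (LinearMap.ker φ) = finrank F ↥V :=
        LinearMap.finrank_range_add_finrank_ker φ
      have hrange1 : finrank F (LinearMap.range φ) ≤ 1 := by
        calc finrank F (LinearMap.range φ) ≤ finrank F F := Submodule.finrank_le _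
          _ = 1 := finrank_self F
      have hkerφ : finrank F (LinearMap.ker φ) = finrank F ↥Ve := by
        have h1 : LinearMap.ker φ = Submodule.comap V.subtype (LinearMap.ker (B E)) :=
          LinearMap.ker_domRestrict V (B E)
        have h2 : Submodule.comap V.subtype Ve = LinearMap.ker φ := by
          rw [h1, hVe, Submodule.comap_inf, Submodule.comap_subtype_self, top_inf_eq]
        rw [← h2]
        exact (Submodule.comapSubtypeEquivOfLe (inf_le_left : Ve ≤ V)).finrank_eq
      omega

variable {h : (Fin m → ℍ[F,a,b]) → (Fin m → ℍ[F,a,b]) → ℍ[F,a,b]}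

/-- Right kernel of pairing against `w`: an `H`-submodule. -/
def pairKer (hh : HermAx h) (w : Fin m → ℍ[F,a,b]) : Submodule ℍ[F,a,b] (Fin m → ℍ[F,a,b]) where
  carrier := {x | h w x = 0}
  add_mem' := by
    intro x y hx hy
    simp only [Set.mem_setOf_eq] at *
    rw [hh.addr, hx, hy, add_zero]
  zero_mem' := hh.zero_right w
  smul_mem' := by
    intro c x hx
    simp only [Set.mem_setOf_eq] at *
    rw [hh.smulr, hx, zero_mul]

lemma mem_pairKer (hh : HermAx h) {w x : Fin m → ℍ[F,a,b]} :
    x ∈ pairKer hh w ↔ h w x = 0 := Iff.rfl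

theorem lemD (hh : HermAx h) (h2 : (2:F) ≠ 0)
    (hdiv : ∀ x : ℍ[F,a,b], x ≠ 0 → IsUnit x) :
    ∀ (n : ℕ) (N : Submodule ℍ[F,a,b] (Fin m → ℍ[F,a,b])),
      finrank F (N.restrictScalars F) ≤ n →
      (∀ x ∈ N, x ≠ 0 → ∃ y ∈ N, h x y ≠ 0) →
      ∃ (K : ℕ) (v u : Fin K → (Fin m → ℍ[F,a,b])),
        (∀ s, v s ∈ N) ∧ (∀ s, u s ∈ N) ∧
        (∀ s t, h (v s) (v t) = 0) ∧ (∀ s t, h (u s) (u t) = 0) ∧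
        (∀ s t, h (v s) (u t) = if s = t then 1 else 0) ∧
        (∀ x ∈ N, (∀ s, h (v s) x = 0 ∧ h (u s) x = 0) → h x x = 0 → x = 0) := by
  intro n
  induction n with
  | zero =>
    intro N hrank _
    refine ⟨0, Fin.elim0, Fin.elim0, fun s => s.elim0, fun s => s.elim0, fun s => s.elim0,
      fun s => s.elim0, fun s => s.elim0, ?_⟩
    intro x hx _ _
    have hbot : N.restrictScalars F = ⊥ := by
      have h0 : finrank F (N.restrictScalars F) = 0 := Nat.le_zero.mp hrank
      exact Submodule.finrank_eq_zero.mp h0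
    have : x ∈ N.restrictScalars F := hx
    rw [hbot] at this
    simpa using this
  | succ n ihn =>
    intro N hrank hnd
    by_cases hani : ∀ x ∈ N, h x x = 0 → x = 0
    · exact ⟨0, Fin.elim0, Fin.elim0, fun s => s.elim0, fun s => s.elim0, fun s => s.elim0,
        fun s => s.elim0, fun s => s.elim0, fun x hx _ hq => hani x hx hq⟩
    push_neg at hani
    obtain ⟨v, hvN, hvv, hv0⟩ := hani
    obtain ⟨y, hyN, hyne⟩ := hnd v hvN hv0
    have hcu : IsUnit (h v y) := hdiv _ hyne
    set u0 : Fin m → ℍ[F,a,b] := (↑hcu.unit⁻¹ : ℍ[F,a,b]) • y with hu0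
    have hu0N : u0 ∈ N := N.smul_mem _ hyN
    have hvu0 : h v u0 = 1 := by
      rw [hu0, hh.smulr]
      exact (congrArg (· * (↑hcu.unit⁻¹ : ℍ[F,a,b])) hcu.unit_spec.symm).trans hcu.unit.mul_inv
    have hu0v : h u0 v = 1 := by rw [hh.herm, hvu0, star_one]
    set r : F := (h u0 u0).re with hr
    have hu0u0 : h u0 u0 = ((r : F) : ℍ[F,a,b]) := by
      refine star_fixed_eq_coe h2 _ ?_
      rw [← hh.herm]
    set u : Fin m → ℍ[F,a,b] := u0 - (r/2 : F) • v with hu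
    have huN : u ∈ N := by
      refine sub_mem hu0N ?_
      rw [← algebraMap_smul (ℍ[F,a,b]) (r/2 : F) v]
      exact N.smul_mem _ hvN
    have hvu : h v u = 1 := by
      rw [hu, hh.sub_right, hh.Fsmul_right, hvu0, hvv, smul_zero, sub_zero]
    have huv : h u v = 1 := by rw [hh.herm, hvu, star_one]
    have hsmul1 : ∀ f : F, f • (1 : ℍ[F,a,b]) = ((f : F) : ℍ[F,a,b]) := by
      intro f
      rw [Algebra.smul_def, mul_one, QuaternionAlgebra.coe_algebraMap]
    have huu : h u u = 0 := by
      rw [hu, hh.sub_left, hh.sub_right, hh.sub_right]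
      rw [hh.Fsmul_right, hh.Fsmul_right]
      have hfl : h ((r/2 : F) • v) u0 = (r/2 : F) • h v u0 := by
        rw [← algebraMap_smul (ℍ[F,a,b]) (r/2 : F) v, hh.smul,
          QuaternionAlgebra.coe_algebraMap, QuaternionAlgebra.star_coe,
          ← QuaternionAlgebra.coe_algebraMap, Algebra.smul_def]
      have hfl2 : h ((r/2 : F) • v) v = (r/2 : F) • h v v := by
        rw [← algebraMap_smul (ℍ[F,a,b]) (r/2 : F) v, hh.smul,
          QuaternionAlgebra.coe_algebraMap, QuaternionAlgebra.star_coe,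
          ← QuaternionAlgebra.coe_algebraMap, Algebra.smul_def]
      rw [hfl, hfl2, hu0u0, hvu0, hu0v, hvv]
      simp only [smul_zero, sub_zero, hsmul1]
      have : ((r : F) : ℍ[F,a,b]) - ((r/2 : F) : ℍ[F,a,b]) - ((r/2 : F) : ℍ[F,a,b])
          = (((r - r/2 - r/2 : F)) : ℍ[F,a,b]) := by
        push_cast
        ring
      rw [this]
      have hzero : r - r/2 - r/2 = 0 := by
        field_simp
        ring
      rw [hzero]
      exact QuaternionAlgebra.coe_zero
    -- the orthogonal complement of the hyperbolic plane
    set N' : Submodule ℍ[F,a,b] (Fin m → ℍ[F,a,b]) := N ⊓ (pairKer hh v ⊓ pairKer hh u)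
      with hN'
    have memN' : ∀ x, x ∈ N' ↔ x ∈ N ∧ h v x = 0 ∧ h u x = 0 := by
      intro x
      simp [hN', Submodule.mem_inf, mem_pairKer]
    have hvnotN' : v ∉ N' := by
      intro hc
      have := ((memN' v).mp hc).2.2
      rw [huv] at this
      exact one_ne_zero this
    have hlt : (N'.restrictScalars F) < (N.restrictScalars F) := by
      refine lt_of_le_of_ne ?_ ?_
      · intro x hx
        exact ((memN' x).mp hx).1
      · intro hc
        apply hvnotN'
        have : v ∈ N'.restrictScalars F := by rw [hc]; exact hvN
        exact this
    have hrank' : finrank F (N'.restrictScalars F) ≤ n := by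
      have := Submodule.finrank_lt_finrank_of_lt hlt
      omega
    have hnd' : ∀ x ∈ N', x ≠ 0 → ∃ y ∈ N', h x y ≠ 0 := by
      intro x hxN' hx0
      obtain ⟨hxN, hvx, hux⟩ := (memN' x).mp hxN'
      obtain ⟨y1, hy1N, hy1⟩ := hnd x hxN hx0
      set y' := y1 - (h u y1) • v - (h v y1) • u with hy'
      have hy'N : y' ∈ N := sub_mem (sub_mem hy1N (N.smul_mem _ hvN)) (N.smul_mem _ huN)
      have hvy' : h v y' = 0 := by
        rw [hy', hh.sub_right, hh.sub_right, hh.smulr, hh.smulr,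
          hvv, hvu, zero_mul, one_mul, sub_zero, sub_self]
      have huy' : h u y' = 0 := by
        rw [hy', hh.sub_right, hh.sub_right, hh.smulr, hh.smulr,
          huv, huu, one_mul, zero_mul, sub_zero, sub_self]
      have hxy' : h x y' = h x y1 := by
        have hxv : h x v = 0 := by rw [hh.herm, hvx, star_zero]
        have hxu : h x u = 0 := by rw [hh.herm, hux, star_zero]
        rw [hy', hh.sub_right, hh.sub_right, hh.smulr, hh.smulr,
          hxv, hxu, zero_mul, zero_mul, sub_zero, sub_zero]
      exact ⟨y', (memN' y').mpr ⟨hy'N, hvy', huy'⟩, by rw [hxy']; exact hy1⟩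
    obtain ⟨K, v', u', hv'N, hu'N, hv'v', hu'u', hv'u', hani'⟩ := ihn N' hrank' hnd'
    have hv'N2 : ∀ s, v' s ∈ N ∧ h v (v' s) = 0 ∧ h u (v' s) = 0 :=
      fun s => (memN' _).mp (hv'N s)
    have hu'N2 : ∀ s, u' s ∈ N ∧ h v (u' s) = 0 ∧ h u (u' s) = 0 :=
      fun s => (memN' _).mp (hu'N s)
    refine ⟨K+1, Fin.cons v v', Fin.cons u u', ?_, ?_, ?_, ?_, ?_, ?_⟩
    · intro s
      rcases Fin.eq_zero_or_eq_succ s with rfl | ⟨s', rfl⟩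
      · simpa using hvN
      · simpa using (hv'N2 s').1
    · intro s
      rcases Fin.eq_zero_or_eq_succ s with rfl | ⟨s', rfl⟩
      · simpa using huN
      · simpa using (hu'N2 s').1
    · intro s t
      rcases Fin.eq_zero_or_eq_succ s with rfl | ⟨s', rfl⟩ <;>
        rcases Fin.eq_zero_or_eq_succ t with rfl | ⟨t', rfl⟩
      · simpa using hvv
      · simpa using (hv'N2 t').2.1
      · rw [Fin.cons_succ, Fin.cons_zero, hh.herm, (hv'N2 s').2.1, star_zero]
      · simpa using hv'v' s' t'
    · intro s t
      rcases Fin.eq_zero_or_eq_succ s with rfl | ⟨s', rfl⟩ <;>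
        rcases Fin.eq_zero_or_eq_succ t with rfl | ⟨t', rfl⟩
      · simpa using huu
      · simpa using (hu'N2 t').2.2
      · rw [Fin.cons_succ, Fin.cons_zero, hh.herm, (hu'N2 s').2.2, star_zero]
      · simpa using hu'u' s' t'
    · intro s t
      rcases Fin.eq_zero_or_eq_succ s with rfl | ⟨s', rfl⟩ <;>
        rcases Fin.eq_zero_or_eq_succ t with rfl | ⟨t', rfl⟩
      · simpa using hvu
      · rw [Fin.cons_zero, Fin.cons_succ, (hu'N2 t').2.1, if_neg]
        exact (Fin.succ_ne_zero t').symm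
      · rw [Fin.cons_succ, Fin.cons_zero, hh.herm, (hv'N2 s').2.2, star_zero, if_neg]
        exact Fin.succ_ne_zero s'
      · rw [Fin.cons_succ, Fin.cons_succ, hv'u' s' t']
        by_cases hst : s' = t'
        · rw [if_pos hst, if_pos (by rw [hst])]
        · rw [if_neg hst, if_neg (fun hc => hst (Fin.succ_inj.mp hc))]
    · intro x hxN hall hq
      have h0 := hall 0
      rw [Fin.cons_zero, Fin.cons_zero] at h0
      have hxN' : x ∈ N' := (memN' x).mpr ⟨hxN, h0.1, h0.2⟩
      refine hani' x hxN' ?_ hq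
      intro s
      have := hall s.succ
      rwa [Fin.cons_succ, Fin.cons_succ] at this

section Assembly

/-- Quaternion basis 1, i, j, k. -/
def omegaQ (F : Type) [Field F] (a b : F) : Fin 4 → ℍ[F,a,b] := fun t =>
  ⟨if t = 0 then 1 else 0, if t = 1 then 1 else 0, if t = 2 then 1 else 0, if t = 3 then 1 else 0⟩

/-- Scaling factors for the dual basis. -/
def muQ (F : Type) [Field F] (a b : F) : Fin 4 → F := fun t =>
  if t = 0 then 1/2 else if t = 1 then -(1/(2*a)) else if t = 2 then -(1/(2*b)) else 1/(2*(a*b))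

/-- Dual quaternion basis. -/
def tauQ (F : Type) [Field F] (a b : F) : Fin 4 → ℍ[F,a,b] := fun t =>
  muQ F a b t • omegaQ F a b t

lemma re_star_mul (x y : ℍ[F,a,b]) :
    (star x * y).re = x.re*y.re - a*x.imI*y.imI - b*x.imJ*y.imJ + a*b*x.imK*y.imK := by
  simp [QuaternionAlgebra.re_mul]
  ring

lemma re_star_mul_comm (x y : ℍ[F,a,b]) : (star x * y).re = (star y * x).re := by
  rw [re_star_mul, re_star_mul]; ring

lemma key4 (h2 : (2:F) ≠ 0) (ha : a ≠ 0) (hb : b ≠ 0) (s t : Fin 4) :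
    2 * (muQ F a b t * (star (omegaQ F a b s) * omegaQ F a b t).re) = if s = t then 1 else 0 := by
  rw [re_star_mul]
  fin_cases s <;> fin_cases t <;> simp [omegaQ, muQ] <;> field_simp <;> ring

lemma key4' (h2 : (2:F) ≠ 0) (ha : a ≠ 0) (hb : b ≠ 0) (s t : Fin 4) :
    (star (omegaQ F a b s) * tauQ F a b t + star (tauQ F a b t) * omegaQ F a b s).re
      = if s = t then 1 else 0 := by
  have hstar : star (tauQ F a b t) = muQ F a b t • star (omegaQ F a b t) := by
    ext <;> simp [tauQ]
  rw [hstar, show tauQ F a b t = muQ F a b t • omegaQ F a b t from rfl,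
    mul_smul_comm, smul_mul_assoc]
  rw [QuaternionAlgebra.re_add, QuaternionAlgebra.re_smul, QuaternionAlgebra.re_smul]
  rw [re_star_mul_comm (omegaQ F a b t) (omegaQ F a b s)]
  have hk := key4 h2 ha hb s t
  simp only [smul_eq_mul]
  linear_combination hk

lemma omega_decomp (c : ℍ[F,a,b]) :
    c = c.re • omegaQ F a b 0 + c.imI • omegaQ F a b 1
      + c.imJ • omegaQ F a b 2 + c.imK • omegaQ F a b 3 := by
  ext <;> simp [omegaQ]

lemma tau_decomp (h2 : (2:F) ≠ 0) (ha : a ≠ 0) (hb : b ≠ 0) (d : ℍ[F,a,b]) :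
    d = (2*d.re) • tauQ F a b 0 + (-(2*a*d.imI)) • tauQ F a b 1
      + (-(2*b*d.imJ)) • tauQ F a b 2 + (2*(a*b)*d.imK) • tauQ F a b 3 := by
  ext <;> simp [tauQ, muQ, omegaQ] <;> field_simp <;> ring

variable (hh : HermAx h)
include hh

lemma hmul2 (c d : ℍ[F,a,b]) (x y : Fin m → ℍ[F,a,b]) :
    h (c • x) (d • y) = star c * h x y * d := by
  rw [hh.smul, hh.smulr, mul_assoc]

/-- The polar bilinear form of the trace form, as an `F`-bilinear map. -/
noncomputable def BF : (Fin m → ℍ[F,a,b]) →ₗ[F] (Fin m → ℍ[F,a,b]) →ₗ[F] F :=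
  LinearMap.mk₂ F (fun x y => (h x y + h y x).re)
    (fun x x' y => by
      show (h (x + x') y + h y (x + x')).re = (h x y + h y x).re + (h x' y + h y x').re
      rw [hh.add, hh.addr]; simp; ring)
    (fun c x y => by
      show (h (c • x) y + h y (c • x)).re = c • (h x y + h y x).re
      rw [hh.Fsmul_left, hh.Fsmul_right]; simp; ring)
    (fun x y y' => by
      show (h x (y + y') + h (y + y') x).re = (h x y + h y x).re + (h x y' + h y' x).re
      rw [hh.addr, hh.add]; simp; ring)
    (fun c x y => by
      show (h x (c • y) + h (c • y) x).re = c • (h x y + h y x).re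
      rw [hh.Fsmul_right, hh.Fsmul_left]; simp; ring)

lemma BF_apply (x y : Fin m → ℍ[F,a,b]) : BF hh x y = (h x y + h y x).re := rfl

lemma polarF (x y : Fin m → ℍ[F,a,b]) :
    (h (x+y) (x+y)).re = (h x x).re + (h y y).re + BF hh x y := by
  rw [hh.add, hh.addr, hh.addr, BF_apply]
  simp
  ring

lemma smulqF (c : F) (x : Fin m → ℍ[F,a,b]) :
    (h (c•x) (c•x)).re = c^2 * (h x x).re := by
  rw [hh.Fsmul_left, hh.Fsmul_right]
  simp
  ring

lemma hxx_eq_coe (h2 : (2:F) ≠ 0) (x : Fin m → ℍ[F,a,b]) :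
    h x x = (((h x x).re : F) : ℍ[F,a,b]) :=
  star_fixed_eq_coe h2 _ (by rw [← hh.herm])

/-- The common orthogonal complement of the hyperbolic pairs, as an `F`-submodule. -/
def resid {K : ℕ} (v u : Fin K → (Fin m → ℍ[F,a,b])) : Submodule F (Fin m → ℍ[F,a,b]) where
  carrier := {x | ∀ j, h (v j) x = 0 ∧ h (u j) x = 0}
  zero_mem' := fun j => ⟨hh.zero_right _, hh.zero_right _⟩
  add_mem' := by
    intro x y hx hy j
    exact ⟨by rw [hh.addr, (hx j).1, (hy j).1, add_zero],
      by rw [hh.addr, (hx j).2, (hy j).2, add_zero]⟩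
  smul_mem' := by
    intro c x hx j
    exact ⟨by rw [hh.Fsmul_right, (hx j).1, smul_zero],
      by rw [hh.Fsmul_right, (hx j).2, smul_zero]⟩

lemma mem_resid {K : ℕ} {v u : Fin K → (Fin m → ℍ[F,a,b])} {x : Fin m → ℍ[F,a,b]} :
    x ∈ resid hh v u ↔ ∀ j, h (v j) x = 0 ∧ h (u j) x = 0 := Iff.rfl

/-- Left kernel of pairing against `y`: an `H`-submodule. -/
def leftKer (y : Fin m → ℍ[F,a,b]) : Submodule ℍ[F,a,b] (Fin m → ℍ[F,a,b]) where
  carrier := {x | h x y = 0}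
  zero_mem' := hh.zero_left y
  add_mem' := by
    intro x x' hx hx'
    simp only [Set.mem_setOf_eq] at *
    rw [hh.add, hx, hx', add_zero]
  smul_mem' := by
    intro c x hx
    simp only [Set.mem_setOf_eq] at *
    rw [hh.smul, hx, mul_zero]

lemma mem_leftKer {y x : Fin m → ℍ[F,a,b]} :
    x ∈ leftKer hh y ↔ h x y = 0 := Iff.rfl

lemma sum_left {ι : Type} (s : Finset ι) (y : Fin m → ℍ[F,a,b])
    (z : ι → (Fin m → ℍ[F,a,b])) :
    h (∑ i ∈ s, z i) y = ∑ i ∈ s, h (z i) y := map_sum (hh.lhom y) z s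

end Assembly

end WittQH

open WittQH Module Submodule

/-- Let `H = (a,b)_F` be a quaternion division algebra over `F` (char `F ≠ 2`) with its
canonical involution `star`, and let `h` be a nondegenerate hermitian form of rank `m`
over `(H, star)`.  The Witt index of the trace form `q_h(x) = h(x,x)` (a `4m`-dimensional
`F`-quadratic form on `Hᵐ`) equals four times the Witt index of `h`. -/
theorem wittIndex_trace_form_quaternionic
    (F : Type) [Field F] (h2 : (2 : F) ≠ 0)
    (a b : F) (ha : a ≠ 0) (hb : b ≠ 0)
    (hdiv : ∀ x : QuaternionAlgebra F a 0 b, x ≠ 0 → IsUnit x)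
    (m : ℕ) (h : (Fin m → QuaternionAlgebra F a 0 b) → (Fin m → QuaternionAlgebra F a 0 b) →
      QuaternionAlgebra F a 0 b)
    (hadd : ∀ x x' y, h (x + x') y = h x y + h x' y)
    (hsmul : ∀ (c : QuaternionAlgebra F a 0 b) (x y), h (c • x) y = star c * h x y)
    (hherm : ∀ x y, h y x = star (h x y))
    (hnd : ∀ x, (∀ y, h x y = 0) → x = 0) :
    sSup {r | ∃ W : Submodule F (Fin m → QuaternionAlgebra F a 0 b),
        (∀ x ∈ W, h x x = 0) ∧ Module.finrank F ↥W = r}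
      = 4 * sSup {r | ∃ W : Submodule (QuaternionAlgebra F a 0 b)
            (Fin m → QuaternionAlgebra F a 0 b),
          (∀ x ∈ W, ∀ y ∈ W, h x y = 0) ∧
          Module.finrank (QuaternionAlgebra F a 0 b) ↥W = r} := by
  classical
  have hh : WittQH.HermAx h := ⟨hadd, hsmul, hherm⟩
  letI : DivisionRing (QuaternionAlgebra F a 0 b) :=
    DivisionRing.ofIsUnitOrEqZero (fun x => (em (x = 0)).elim Or.inr (fun hx => Or.inl (hdiv x hx)))
  set S1 : Set ℕ := {r | ∃ W : Submodule F (Fin m → QuaternionAlgebra F a 0 b),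
      (∀ x ∈ W, h x x = 0) ∧ Module.finrank F ↥W = r} with hS1
  set S2 : Set ℕ := {r | ∃ W : Submodule (QuaternionAlgebra F a 0 b)
        (Fin m → QuaternionAlgebra F a 0 b),
      (∀ x ∈ W, ∀ y ∈ W, h x y = 0) ∧
      Module.finrank (QuaternionAlgebra F a 0 b) ↥W = r} with hS2
  have hS1bdd : BddAbove S1 := by
    refine ⟨Module.finrank F (Fin m → QuaternionAlgebra F a 0 b), ?_⟩
    rintro d ⟨W, _, rfl⟩
    exact Submodule.finrank_le W
  have hS2bdd : BddAbove S2 := by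
    refine ⟨Module.finrank (QuaternionAlgebra F a 0 b) (Fin m → QuaternionAlgebra F a 0 b), ?_⟩
    rintro d ⟨W, _, rfl⟩
    exact Submodule.finrank_le W
  have hS2ne : S2.Nonempty := by
    refine ⟨0, ⊥, ?_, finrank_bot _ _⟩
    intro x hx y hy
    rw [Submodule.mem_bot] at hx
    rw [hx]
    exact hh.zero_left y
  have hS1ne : S1.Nonempty := by
    refine ⟨0, ⊥, ?_, finrank_bot _ _⟩
    intro x hx
    rw [Submodule.mem_bot] at hx
    rw [hx]
    exact hh.zero_left 0
  -- apply the decomposition lemma to the full space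
  have hndT : ∀ x ∈ (⊤ : Submodule (QuaternionAlgebra F a 0 b) (Fin m → QuaternionAlgebra F a 0 b)),
      x ≠ 0 → ∃ y ∈ (⊤ : Submodule (QuaternionAlgebra F a 0 b) (Fin m → QuaternionAlgebra F a 0 b)),
        h x y ≠ 0 := by
    intro x _ hx0
    by_contra hc
    push_neg at hc
    exact hx0 (hnd x (fun y => hc y trivial))
  obtain ⟨K, v, u, hvT, huT, hvv, huu, hvu, hani⟩ :=
    WittQH.lemD hh h2 hdiv
      (Module.finrank F (((⊤ : Submodule (QuaternionAlgebra F a 0 b)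
        (Fin m → QuaternionAlgebra F a 0 b))).restrictScalars F)) ⊤ le_rfl hndT
  have huv : ∀ s t, h (u s) (v t) = if s = t then 1 else 0 := by
    intro s t
    rw [hh.herm, hvu t s]
    by_cases hst : t = s
    · subst hst; simp
    · rw [if_neg hst, if_neg (fun hc => hst hc.symm), star_zero]
  -- `K` is the dimension of a totally isotropic `H`-submodule
  have hKS2 : K ∈ S2 := by
    refine ⟨Submodule.span (QuaternionAlgebra F a 0 b) (Set.range v), ?_, ?_⟩
    · intro x hx y hy
      have step1 : ∀ t, ∀ z ∈ Submodule.span (QuaternionAlgebra F a 0 b) (Set.range v),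
          h (v t) z = 0 := by
        intro t z hz
        have : Submodule.span (QuaternionAlgebra F a 0 b) (Set.range v) ≤
            WittQH.pairKer hh (v t) := by
          rw [Submodule.span_le]
          rintro _ ⟨s, rfl⟩
          exact hvv t s
        exact this hz
      have step2 : Submodule.span (QuaternionAlgebra F a 0 b) (Set.range v) ≤
          WittQH.leftKer hh y := by
        rw [Submodule.span_le]
        rintro _ ⟨s, rfl⟩
        exact step1 s y hy
      exact step2 hx
    · have hli : LinearIndependent (QuaternionAlgebra F a 0 b) v := by
        rw [linearIndependent_iff']
        intro s g hsum t ht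
        have h0 : h (∑ i ∈ s, g i • v i) (u t) = 0 := by rw [hsum]; exact hh.zero_left _
        rw [WittQH.sum_left hh] at h0
        have : ∀ i ∈ s, h (g i • v i) (u t) = if i = t then star (g i) else 0 := by
          intro i _
          rw [hh.smul, hvu i t]
          split_ifs <;> simp
        rw [Finset.sum_congr rfl this, Finset.sum_ite_eq' s t _] at h0
        rw [if_pos ht] at h0
        exact star_eq_zero.mp h0
      rw [finrank_span_eq_card hli, Fintype.card_fin]
  -- upper bound : every element of S1 is at most 4 * K
  set e : Fin K × Fin 4 → (Fin m → QuaternionAlgebra F a 0 b) :=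
    fun p => WittQH.omegaQ F a b p.2 • v p.1 with he
  set f : Fin K × Fin 4 → (Fin m → QuaternionAlgebra F a 0 b) :=
    fun p => WittQH.tauQ F a b p.2 • u p.1 with hf
  set M0 := WittQH.resid hh v u with hM0
  have hB2 : ∀ (c d : QuaternionAlgebra F a 0 b) x y,
      WittQH.BF hh (c • x) (d • y) = (star c * h x y * d + star d * h y x * c).re := by
    intro c d x y
    rw [WittQH.BF_apply, WittQH.hmul2 hh, WittQH.hmul2 hh]
  have heeB : ∀ p q : Fin K × Fin 4, WittQH.BF hh (e p) (e q) = 0 := by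
    rintro ⟨j, s⟩ ⟨j', t⟩
    rw [he]
    simp only
    rw [hB2, hvv j j', hvv j' j]
    simp
  have hffB : ∀ p q : Fin K × Fin 4, WittQH.BF hh (f p) (f q) = 0 := by
    rintro ⟨j, s⟩ ⟨j', t⟩
    rw [hf]
    simp only
    rw [hB2, huu j j', huu j' j]
    simp
  have hefB : ∀ p q : Fin K × Fin 4, WittQH.BF hh (e p) (f q) = if p = q then 1 else 0 := by
    rintro ⟨j, s⟩ ⟨j', t⟩
    rw [he, hf]
    simp only
    rw [hB2, hvu j j', huv j' j]
    by_cases hjj : j = j'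
    · subst hjj
      rw [if_pos rfl, mul_one, mul_one]
      rw [WittQH.key4' h2 ha hb s t]
      by_cases hst : s = t
      · subst hst; simp
      · rw [if_neg hst, if_neg (fun hc : (j, s) = (j, t) => hst (Prod.ext_iff.mp hc).2)]
    · rw [if_neg hjj, if_neg (fun hc => hjj hc.symm)]
      rw [if_neg (fun hc : (j, s) = (j', t) => hjj (Prod.ext_iff.mp hc).1)]
      simp
  have hqeF : ∀ p : Fin K × Fin 4, (h (e p) (e p)).re = 0 := by
    rintro ⟨j, s⟩
    rw [he]
    simp only
    rw [WittQH.hmul2 hh, hvv j j]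
    simp
  have hqfF : ∀ p : Fin K × Fin 4, (h (f p) (f p)).re = 0 := by
    rintro ⟨j, s⟩
    rw [hf]
    simp only
    rw [WittQH.hmul2 hh, huu j j]
    simp
  have he0B : ∀ p : Fin K × Fin 4, ∀ x ∈ M0, WittQH.BF hh (e p) x = 0 := by
    rintro ⟨j, s⟩ x hx
    have hvx : h (v j) x = 0 := ((WittQH.mem_resid hh).mp hx j).1
    rw [he]
    simp only
    rw [WittQH.BF_apply, hh.smul, hvx, mul_zero]
    have : h x (WittQH.omegaQ F a b s • v j) = 0 := by
      rw [hh.herm, hh.smul, hvx, mul_zero, star_zero]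
    rw [this]
    simp
  have hf0B : ∀ p : Fin K × Fin 4, ∀ x ∈ M0, WittQH.BF hh (f p) x = 0 := by
    rintro ⟨j, s⟩ x hx
    have hux : h (u j) x = 0 := ((WittQH.mem_resid hh).mp hx j).2
    rw [hf]
    simp only
    rw [WittQH.BF_apply, hh.smul, hux, mul_zero]
    have : h x (WittQH.tauQ F a b s • u j) = 0 := by
      rw [hh.herm, hh.smul, hux, mul_zero, star_zero]
    rw [this]
    simp
  have hanM0 : ∀ x ∈ M0, (h x x).re = 0 → x = 0 := by
    intro x hx hq
    refine hani x trivial ((WittQH.mem_resid hh).mp hx) ?_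
    rw [WittQH.hxx_eq_coe hh h2 x, hq]
    exact QuaternionAlgebra.coe_zero
  -- spanning
  have hspan : ∀ x : (Fin m → QuaternionAlgebra F a 0 b),
      x ∈ M0 ⊔ (Submodule.span F (e '' ↑(Finset.univ : Finset (Fin K × Fin 4)))
        ⊔ Submodule.span F (f '' ↑(Finset.univ : Finset (Fin K × Fin 4)))) := by
    intro x
    set A := ∑ j : Fin K, h (u j) x • v j with hA
    set Bb := ∑ j : Fin K, h (v j) x • u j with hBb
    have hxeq : x = (x - A - Bb) + (A + Bb) := by abel
    have hx'M0 : (x - A - Bb) ∈ M0 := by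
      refine (WittQH.mem_resid hh).mpr (fun j => ⟨?_, ?_⟩)
      · rw [hh.sub_right, hh.sub_right]
        have t2 : h (v j) A = 0 := by
          rw [hA, hh.sum_right]
          refine Finset.sum_eq_zero (fun i _ => ?_)
          rw [hh.smulr, hvv j i, zero_mul]
        have t3 : h (v j) Bb = h (v j) x := by
          rw [hBb, hh.sum_right]
          have hterm : ∀ i ∈ Finset.univ, h (v j) (h (v i) x • u i)
              = if j = i then h (v i) x else 0 := by
            intro i _
            rw [hh.smulr, hvu j i, ite_mul, one_mul, zero_mul]
          rw [Finset.sum_congr rfl hterm, Finset.sum_ite_eq]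
          simp
        rw [t2, t3, sub_zero, sub_self]
      · rw [hh.sub_right, hh.sub_right]
        have t2 : h (u j) A = h (u j) x := by
          rw [hA, hh.sum_right]
          have hterm : ∀ i ∈ Finset.univ, h (u j) (h (u i) x • v i)
              = if j = i then h (u i) x else 0 := by
            intro i _
            rw [hh.smulr, huv j i, ite_mul, one_mul, zero_mul]
          rw [Finset.sum_congr rfl hterm, Finset.sum_ite_eq]
          simp
        have t3 : h (u j) Bb = 0 := by
          rw [hBb, hh.sum_right]
          refine Finset.sum_eq_zero (fun i _ => ?_)
          rw [hh.smulr, huu j i, zero_mul]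
        rw [t2, t3, sub_zero, sub_self]
    have hbase : ∀ (j : Fin K) (t : Fin 4),
        WittQH.omegaQ F a b t • v j ∈
          Submodule.span F (e '' ↑(Finset.univ : Finset (Fin K × Fin 4))) := by
      intro j t
      exact Submodule.subset_span ⟨(j, t), by simp, rfl⟩
    have hbasef : ∀ (j : Fin K) (t : Fin 4),
        WittQH.tauQ F a b t • u j ∈
          Submodule.span F (f '' ↑(Finset.univ : Finset (Fin K × Fin 4))) := by
      intro j t
      exact Submodule.subset_span ⟨(j, t), by simp, rfl⟩
    have hAmem : A ∈ Submodule.span F (e '' ↑(Finset.univ : Finset (Fin K × Fin 4))) := by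
      rw [hA]
      refine Submodule.sum_mem _ (fun j _ => ?_)
      have hc := WittQH.omega_decomp (F := F) (a := a) (b := b) (h (u j) x)
      have hrw : h (u j) x • v j
          = (h (u j) x).re • (WittQH.omegaQ F a b 0 • v j)
            + (h (u j) x).imI • (WittQH.omegaQ F a b 1 • v j)
            + (h (u j) x).imJ • (WittQH.omegaQ F a b 2 • v j)
            + (h (u j) x).imK • (WittQH.omegaQ F a b 3 • v j) := by
        conv_lhs => rw [hc]
        rw [add_smul, add_smul, add_smul, smul_assoc, smul_assoc, smul_assoc, smul_assoc]
      rw [hrw]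
      exact add_mem (add_mem (add_mem (Submodule.smul_mem _ _ (hbase j 0))
        (Submodule.smul_mem _ _ (hbase j 1))) (Submodule.smul_mem _ _ (hbase j 2)))
        (Submodule.smul_mem _ _ (hbase j 3))
    have hBmem : Bb ∈ Submodule.span F (f '' ↑(Finset.univ : Finset (Fin K × Fin 4))) := by
      rw [hBb]
      refine Submodule.sum_mem _ (fun j _ => ?_)
      have hc := WittQH.tau_decomp (F := F) (a := a) (b := b) h2 ha hb (h (v j) x)
      have hrw : h (v j) x • u j
          = (2*(h (v j) x).re) • (WittQH.tauQ F a b 0 • u j)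
            + (-(2*a*(h (v j) x).imI)) • (WittQH.tauQ F a b 1 • u j)
            + (-(2*b*(h (v j) x).imJ)) • (WittQH.tauQ F a b 2 • u j)
            + (2*(a*b)*(h (v j) x).imK) • (WittQH.tauQ F a b 3 • u j) := by
        conv_lhs => rw [hc]
        rw [add_smul, add_smul, add_smul, smul_assoc, smul_assoc, smul_assoc, smul_assoc]
      rw [hrw]
      exact add_mem (add_mem (add_mem (Submodule.smul_mem _ _ (hbasef j 0))
        (Submodule.smul_mem _ _ (hbasef j 1))) (Submodule.smul_mem _ _ (hbasef j 2)))
        (Submodule.smul_mem _ _ (hbasef j 3))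
    rw [hxeq]
    exact add_mem (Submodule.mem_sup_left hx'M0)
      (Submodule.mem_sup_right (add_mem (Submodule.mem_sup_left hAmem)
        (Submodule.mem_sup_right hBmem)))
  have hbound : ∀ d ∈ S1, d ≤ 4 * K := by
    rintro d ⟨V, hViso, rfl⟩
    have hq : ∀ x ∈ V, (h x x).re = 0 := by
      intro x hx
      rw [hViso x hx]
      simp
    have bound := WittQH.lemIII (fun x => (h x x).re) (WittQH.BF hh)
      (fun x y => WittQH.polarF hh x y) (fun c x => WittQH.smulqF hh c x)
      (fun x y => by rw [WittQH.BF_apply, WittQH.BF_apply, add_comm])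
      e f M0 hanM0 Finset.univ
      (fun p _ q _ => heeB p q) (fun p _ q _ => hffB p q) (fun p _ q _ => hefB p q)
      (fun p _ => hqeF p) (fun p _ => hqfF p)
      (fun p _ x hx => he0B p x hx) (fun p _ x hx => hf0B p x hx)
      V hq (fun x _ => hspan x)
    calc Module.finrank F ↥V ≤ (Finset.univ : Finset (Fin K × Fin 4)).card := bound
      _ = 4 * K := by simp [Finset.card_univ, mul_comm]
  -- conclusion
  refine le_antisymm ?_ ?_
  · refine csSup_le hS1ne ?_
    intro d hd
    have h1 : d ≤ 4 * K := hbound d hd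
    have h2' : K ≤ sSup S2 := le_csSup hS2bdd hKS2
    omega
  · obtain ⟨W0, hW0iso, hW0r⟩ := Nat.sSup_mem hS2ne hS2bdd
    refine le_csSup hS1bdd ?_
    refine ⟨W0.restrictScalars F, fun x hx => hW0iso x hx x hx, ?_⟩
    have e1 : Module.finrank F (QuaternionAlgebra F a 0 b)
        * Module.finrank (QuaternionAlgebra F a 0 b) ↥(W0.restrictScalars F)
        = Module.finrank F ↥(W0.restrictScalars F) :=
      Module.finrank_mul_finrank F (QuaternionAlgebra F a 0 b) ↥(W0.restrictScalars F)
    have e2 : Module.finrank (QuaternionAlgebra F a 0 b) ↥(W0.restrictScalars F)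
        = Module.finrank (QuaternionAlgebra F a 0 b) ↥W0 :=
      (Submodule.restrictScalarsEquiv F (QuaternionAlgebra F a 0 b) _ W0).finrank_eq
    have e3 : Module.finrank F (QuaternionAlgebra F a 0 b) = 4 :=
      QuaternionAlgebra.finrank_eq_four a 0 b
    rw [← e1, e2, e3, hW0r]
end
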